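/- Let p be an odd prime and k an integer with 0 ≤ k ≤ p−1. Then (−1)^k · C(p−1, k) ≡ 1 − p·H_k (mod p²), where H_k = ∑_{j=1}^{k} 1/j is interpreted via inverses modulo p² of integers j prime to p (all 1 ≤ j ≤ k < p are prime to p). -/

import Mathlib

theorem stmt_6 (p k : ℕ) (hp : p.Prime) (hodd : Odd p) (hk : k ≤ p - 1) :
    ((-1 : ZMod (p ^ 2)) ^ k) * (Nat.choose (p - 1) k : ZMod (p ^ 2))
      = 1 - (p : ZMod (p ^ 2)) * ∑ j ∈ Finset.Icc 1 k, ((j : ZMod (p ^ 2)))⁻¹ := by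
  induction k with
  | zero => simp
  | succ k ih =>
    have hp2 := hp.two_le
    have hk' : k ≤ p - 1 := le_trans (Nat.le_succ k) hk
    have ihh := ih hk'
    have hkp : k + 1 < p := by omega
    have hcop : (k + 1).Coprime (p ^ 2) :=
      Nat.Coprime.pow_right _
        (Nat.coprime_comm.mp (hp.coprime_iff_not_dvd.mpr
          (Nat.not_dvd_of_pos_of_lt (by omega) hkp)))
    have hinv : ((k + 1 : ℕ) : ZMod (p ^ 2)) * (((k + 1 : ℕ) : ZMod (p ^ 2)))⁻¹ = 1 :=
      ZMod.coe_mul_inv_eq_one _ hcop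
    have hpp : (p : ZMod (p ^ 2)) * (p : ZMod (p ^ 2)) = 0 := by
      have : ((p ^ 2 : ℕ) : ZMod (p ^ 2)) = 0 := ZMod.natCast_self _
      push_cast at this
      linear_combination this
    have hnat : (p - 1).choose (k + 1) * (k + 1) = (p - 1).choose k * (p - 1 - k) :=
      Nat.choose_succ_right_eq _ _
    have hcast : ((p - 1).choose (k + 1) : ZMod (p ^ 2)) * ((k : ZMod (p ^ 2)) + 1)
        = ((p - 1).choose k : ZMod (p ^ 2)) * ((p : ZMod (p ^ 2)) - 1 - (k : ZMod (p ^ 2))) := by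
      have := congrArg (Nat.cast : ℕ → ZMod (p ^ 2)) hnat
      push_cast [Nat.cast_sub (by omega : 1 ≤ p), Nat.cast_sub (by omega : k ≤ p - 1)] at this
      linear_combination this
    rw [Finset.sum_Icc_succ_top (by omega : 1 ≤ k + 1)]
    push_cast at hinv ihh ⊢
    set R := ZMod (p ^ 2)
    set a : R := (-1) ^ k with ha
    set C : R := (((p - 1).choose k : ℕ) : R) with hC
    set C' : R := (((p - 1).choose (k + 1) : ℕ) : R) with hC'
    set u : R := (k : R) + 1 with hu
    set v : R := ((k : R) + 1)⁻¹ with hv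
    set S : R := ∑ j ∈ Finset.Icc 1 k, ((j : R))⁻¹ with hS
    linear_combination (-a * v) * hcast + (a * C' + 1 - (p : R) * S) * hinv
      + (S * v) * hpp + (v * u - v * (p : R)) * ihh
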